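/- arXiv:1405.3018 — 2 statements merged into one kernel-verified Lean document; each statement's English description precedes it below -/
import Mathlib

section
/- Assume t_0 ≠ 1 and for t ∈ (0,1) set τ_j = t^{n−j} t_0 and define the normalized Macdonald–Koornwinder quadratic norm ratio R_λ(t) = ∏_{j=1}^{n} [ (1 − τ_j² q^{2λ_j})/(1 − τ_j²) · ∏_{r=0}^{3} (t_r τ_j)_{λ_j} / (q t_r^{−1} τ_j)_{λ_j} ] · ∏_{1≤j<k≤n} [ (1 − τ_j τ_k q^{λ_j+λ_k})/(1 − τ_j τ_k) · (t τ_j τ_k)_{λ_j+λ_k} / (q t^{−1} τ_j τ_k)_{λ_j+λ_k} · (1 − τ_j τ_k^{−1} q^{λ_j−λ_k})/(1 − τ_j τ_k^{−1}) · (t τ_j τ_k^{−1})_{λ_j−λ_k} / (q t^{−1} τ_j τ_k^{−1})_{λ_j−λ_k} ]. Then for every λ ∈ Λ: lim_{t→0^+} R_λ(t) = (q t_0²)_{λ_{n−1}+λ_n}^{−1} · (1 − t_0² q^{2λ_n})/(1 − t_0²) · ∏_{r=0}^{3} (t_0 t_r)_{λ_n} / (q t_0 t_r^{−1})_{λ_n}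 · ∏_{1≤j<n} (q)_{λ_j−λ_{j+1}}^{−1}. (The t → 0 degeneration of the Macdonald–Koornwinder norm constants to the q-Whittaker norm constants.) -/
open scoped BigOperators
open MeasureTheory Filter

noncomputable section

attribute [local instance] Classical.propDecidable

/-- `lam` is a partition: weakly decreasing with nonnegative entries. -/
def IsPart {n : ℕ} (lam : Fin n → ℤ) : Prop :=
  (∀ j k : Fin n, j ≤ k → lam k ≤ lam j) ∧ ∀ j, 0 ≤ lam j

/-- hyperoctahedral dominance order (non-strict). -/
def domLE {n : ℕ} (mu lam : Fin n → ℤ) : Prop :=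
  ∀ k : Fin n, ∑ j ∈ Finset.univ.filter (fun j : Fin n => j ≤ k), mu j
             ≤ ∑ j ∈ Finset.univ.filter (fun j : Fin n => j ≤ k), lam j

/-- strict dominance order. -/
def domLT {n : ℕ} (mu lam : Fin n → ℤ) : Prop := domLE mu lam ∧ mu ≠ lam

/-- action of a signed permutation on an integer vector. -/
def signAct {n : ℕ} (σ : Equiv.Perm (Fin n)) (ε : Fin n → Bool) (v : Fin n → ℤ) :
    Fin n → ℤ := fun j => (if ε j then 1 else -1) * v (σ j)

/-- the orbit of `lam` under the hyperoctahedral group `W`, as a finite set. -/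
def Worbit {n : ℕ} (lam : Fin n → ℤ) : Finset (Fin n → ℤ) :=
  Finset.image (fun w : Equiv.Perm (Fin n) × (Fin n → Bool) => signAct w.1 w.2 lam)
    Finset.univ

/-- hyperoctahedral monomial symmetric function `m_λ`. -/
def mSym {n : ℕ} (lam : Fin n → ℤ) (ξ : Fin n → ℝ) : ℂ :=
  ∑ mu ∈ Worbit lam, Complex.exp (Complex.I * ∑ j, (mu j : ℂ) * (ξ j : ℂ))

/-- finite q-Pochhammer symbol (real). -/
def qPochR (q x : ℝ) (m : ℕ) : ℝ := ∏ l ∈ Finset.range m, (1 - x * q ^ l)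

/-- infinite q-Pochhammer symbol (complex). -/
def qPochInf (q x : ℂ) : ℂ := ∏' l : ℕ, (1 - x * q ^ l)

/-- infinite q-Pochhammer symbol (real). -/
def qPochInfR (q x : ℝ) : ℝ := ∏' l : ℕ, (1 - x * q ^ l)

/-- the weight function Δ̂. -/
def qwWeight {n : ℕ} (q : ℝ) (th : Fin 4 → ℝ) (ξ : Fin n → ℝ) : ℝ :=
  (2 * Real.pi)⁻¹ ^ n *
  (∏ p ∈ Finset.univ.filter (fun p : Fin n × Fin n => p.1 < p.2),
      ‖qPochInf (q : ℂ) (Complex.exp (Complex.I * ((ξ p.1 : ℂ) + (ξ p.2 : ℂ)))) *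
        qPochInf (q : ℂ) (Complex.exp (Complex.I * ((ξ p.1 : ℂ) - (ξ p.2 : ℂ))))‖ ^ 2) *
  ∏ j, ‖qPochInf (q : ℂ) (Complex.exp (2 * Complex.I * (ξ j : ℂ))) /
        ∏ r, qPochInf (q : ℂ) ((th r : ℂ) * Complex.exp (Complex.I * (ξ j : ℂ)))‖ ^ 2

/-- the hyperoctahedral Weyl alcove 𝔸. -/
def alcove (n : ℕ) : Set (Fin n → ℝ) :=
  {ξ | StrictAnti ξ ∧ ∀ j, 0 < ξ j ∧ ξ j < Real.pi}

/-- deformed hyperoctahedral q-Whittaker family. -/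
def IsQWhitFam {n : ℕ} (q : ℝ) (th : Fin 4 → ℝ)
    (p : (Fin n → ℤ) → (Fin n → ℝ) → ℂ) : Prop :=
  ∀ lam : Fin n → ℤ, IsPart lam →
    (∃ c : (Fin n → ℤ) → ℂ, (Function.support c).Finite ∧
        (∀ mu, c mu ≠ 0 → IsPart mu ∧ domLT mu lam) ∧
        ∀ ξ : Fin n → ℝ, p lam ξ = mSym lam ξ + ∑ᶠ mu, c mu * mSym mu ξ) ∧
    (∀ mu : Fin n → ℤ, IsPart mu → domLT mu lam →
      (∫ ξ in alcove n, p lam ξ * (starRingEnd ℂ) (mSym mu ξ) * (qwWeight q th ξ : ℂ)) = 0)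

/-- padded access to the parts of `lam` (0-indexed); out-of-range values are never used. -/
def getp {n : ℕ} (lam : Fin n → ℤ) (k : ℕ) : ℤ := if h : k < n then lam ⟨k, h⟩ else 0

/-- standard unit vector `e_j` in ℤⁿ. -/
def eVec {n : ℕ} (j : Fin n) : Fin n → ℤ := fun k => if k = j then 1 else 0

/-- `τ_j = t^{n-j} t_0` (0-indexed `j`). -/
def tauMK {n : ℕ} (tt t0 : ℝ) (j : Fin n) : ℝ := tt ^ (n - 1 - (j : ℕ)) * t0

/-- the normalized Macdonald-Koornwinder quadratic norm ratio `R_λ(t)`. -/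
def Rnorm {n : ℕ} (q t0 : ℝ) (t : Fin 4 → ℝ) (tt : ℝ) (lam : Fin n → ℤ) : ℝ :=
  (∏ j : Fin n,
      ((1 - tauMK tt t0 j ^ 2 * q ^ (2 * lam j)) / (1 - tauMK tt t0 j ^ 2) *
        ∏ r, qPochR q (t r * tauMK tt t0 j) (lam j).toNat /
             qPochR q (q * (t r)⁻¹ * tauMK tt t0 j) (lam j).toNat)) *
  ∏ pr ∈ Finset.univ.filter (fun pr : Fin n × Fin n => pr.1 < pr.2),
    ((1 - tauMK tt t0 pr.1 * tauMK tt t0 pr.2 * q ^ (lam pr.1 + lam pr.2)) /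
        (1 - tauMK tt t0 pr.1 * tauMK tt t0 pr.2) *
      (qPochR q (tt * tauMK tt t0 pr.1 * tauMK tt t0 pr.2) ((lam pr.1 + lam pr.2).toNat) /
       qPochR q (q * tt⁻¹ * tauMK tt t0 pr.1 * tauMK tt t0 pr.2) ((lam pr.1 + lam pr.2).toNat)) *
      ((1 - tauMK tt t0 pr.1 * (tauMK tt t0 pr.2)⁻¹ * q ^ (lam pr.1 - lam pr.2)) /
        (1 - tauMK tt t0 pr.1 * (tauMK tt t0 pr.2)⁻¹)) *
      (qPochR q (tt * tauMK tt t0 pr.1 * (tauMK tt t0 pr.2)⁻¹) ((lam pr.1 - lam pr.2).toNat) /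
       qPochR q (q * tt⁻¹ * tauMK tt t0 pr.1 * (tauMK tt t0 pr.2)⁻¹) ((lam pr.1 - lam pr.2).toNat)))


/-! ### Auxiliary lemmas for `stmt14` -/

lemma qPochR_zero' (q : ℝ) (m : ℕ) : qPochR q 0 m = 1 := by simp [qPochR]

lemma qPochR_pos' {q x : ℝ} (hq0 : 0 ≤ q) (hq1 : q ≤ 1) (hx : |x| < 1) (m : ℕ) :
    0 < qPochR q x m := by
  apply Finset.prod_pos
  intro l _
  have h1 : |x * q ^ l| < 1 := by
    rw [abs_mul, abs_pow, abs_of_nonneg hq0]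
    calc |x| * q ^ l ≤ |x| * 1 := by gcongr; exact pow_le_one₀ hq0 hq1
    _ < 1 := by simpa using hx
  have := (abs_lt.mp h1).2
  linarith

@[fun_prop]
lemma qPochR_cont (q : ℝ) (m : ℕ) : Continuous (fun x : ℝ => qPochR q x m) := by
  unfold qPochR
  exact continuous_finset_prod _ fun l _ => by fun_prop

/-- off-diagonal model function. -/
noncomputable def Bfun (q t0 : ℝ) (m1 m2 : ℤ) (c d : ℕ) (tt : ℝ) : ℝ :=
  (1 - tt ^ (c + d) * t0 ^ 2 * q ^ m1) / (1 - tt ^ (c + d) * t0 ^ 2) *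
    (qPochR q (tt ^ (c + d + 1) * t0 ^ 2) m1.toNat /
      qPochR q (q * (tt ^ (c + d - 1) * t0 ^ 2)) m1.toNat) *
    ((1 - tt ^ (c - d) * q ^ m2) / (1 - tt ^ (c - d))) *
    (qPochR q (tt ^ (c - d + 1)) m2.toNat / qPochR q (q * tt ^ (c - d - 1)) m2.toNat)

/-- diagonal model function. -/
noncomputable def Dfun (q t0 : ℝ) (t : Fin 4 → ℝ) (M : ℤ) (e : ℕ) (tt : ℝ) : ℝ :=
  (1 - (tt ^ e * t0) ^ 2 * q ^ (2 * M)) / (1 - (tt ^ e * t0) ^ 2) *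
    ∏ r, qPochR q (t r * (tt ^ e * t0)) M.toNat /
      qPochR q (q * (t r)⁻¹ * (tt ^ e * t0)) M.toNat

lemma inv_mul_pow' {tt : ℝ} (htt : tt ≠ 0) {e : ℕ} (he : e ≠ 0) :
    tt⁻¹ * tt ^ e = tt ^ (e - 1) := by
  obtain ⟨e', rfl⟩ : ∃ e', e = e' + 1 := ⟨e - 1, by omega⟩
  rw [pow_succ', ← mul_assoc, inv_mul_cancel₀ htt, one_mul]
  simp

lemma pair_eq (q : ℝ) {t0 : ℝ} (ht0 : t0 ≠ 0) {tt : ℝ} (htt : tt ≠ 0) {c d : ℕ}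
    (hcd : d < c) (m1 m2 : ℤ) :
    (1 - tt ^ c * t0 * (tt ^ d * t0) * q ^ m1) / (1 - tt ^ c * t0 * (tt ^ d * t0)) *
      (qPochR q (tt * (tt ^ c * t0) * (tt ^ d * t0)) m1.toNat /
        qPochR q (q * tt⁻¹ * (tt ^ c * t0) * (tt ^ d * t0)) m1.toNat) *
      ((1 - tt ^ c * t0 * (tt ^ d * t0)⁻¹ * q ^ m2) / (1 - tt ^ c * t0 * (tt ^ d * t0)⁻¹)) *
      (qPochR q (tt * (tt ^ c * t0) * (tt ^ d * t0)⁻¹) m2.toNat /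
        qPochR q (q * tt⁻¹ * (tt ^ c * t0) * (tt ^ d * t0)⁻¹) m2.toNat) =
    Bfun q t0 m1 m2 c d tt := by
  have hc : tt ^ c = tt ^ (c - d) * tt ^ d := by rw [← pow_add]; congr 1; omega
  have h1 : tt ^ c * t0 * (tt ^ d * t0) = tt ^ (c + d) * t0 ^ 2 := by rw [pow_add]; ring
  have h2 : tt * (tt ^ c * t0) * (tt ^ d * t0) = tt ^ (c + d + 1) * t0 ^ 2 := by
    rw [pow_succ, pow_add]; ring
  have h3 : q * tt⁻¹ * (tt ^ c * t0) * (tt ^ d * t0) = q * (tt ^ (c + d - 1) * t0 ^ 2) := by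
    calc q * tt⁻¹ * (tt ^ c * t0) * (tt ^ d * t0) = q * (tt⁻¹ * tt ^ (c + d) * t0 ^ 2) := by
          rw [pow_add]; ring
    _ = q * (tt ^ (c + d - 1) * t0 ^ 2) := by rw [inv_mul_pow' htt (by omega)]
  have h4 : tt ^ c * t0 * (tt ^ d * t0)⁻¹ = tt ^ (c - d) := by
    rw [hc]; field_simp
  have h5 : tt * (tt ^ c * t0) * (tt ^ d * t0)⁻¹ = tt ^ (c - d + 1) := by
    calc tt * (tt ^ c * t0) * (tt ^ d * t0)⁻¹ = tt * (tt ^ c * t0 * (tt ^ d * t0)⁻¹) := by ring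
    _ = tt * tt ^ (c - d) := by rw [h4]
    _ = tt ^ (c - d + 1) := (pow_succ' tt _).symm
  have h6 : q * tt⁻¹ * (tt ^ c * t0) * (tt ^ d * t0)⁻¹ = q * tt ^ (c - d - 1) := by
    calc q * tt⁻¹ * (tt ^ c * t0) * (tt ^ d * t0)⁻¹
        = q * (tt⁻¹ * (tt ^ c * t0 * (tt ^ d * t0)⁻¹)) := by ring
    _ = q * (tt⁻¹ * tt ^ (c - d)) := by rw [h4]
    _ = q * tt ^ (c - d - 1) := by rw [inv_mul_pow' htt (by omega)]
  unfold Bfun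
  rw [h2, h3, h1, h5, h6, h4]

lemma Dfun_zero_pos (q t0 : ℝ) (t : Fin 4 → ℝ) (M : ℤ) {e : ℕ} (he : e ≠ 0) :
    Dfun q t0 t M e 0 = 1 := by
  simp [Dfun, zero_pow he, qPochR]

lemma Dfun_zero_top (q t0 : ℝ) (t : Fin 4 → ℝ) (M : ℤ) :
    Dfun q t0 t M 0 0 =
      (1 - t0 ^ 2 * q ^ (2 * M)) / (1 - t0 ^ 2) *
        ∏ r, qPochR q (t r * t0) M.toNat / qPochR q (q * (t r)⁻¹ * t0) M.toNat := by
  simp [Dfun]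

lemma Bfun_zero_far (q t0 : ℝ) (m1 m2 : ℤ) {c d : ℕ} (h : d + 2 ≤ c) :
    Bfun q t0 m1 m2 c d 0 = 1 := by
  simp [Bfun, zero_pow (show c + d ≠ 0 by omega), zero_pow (show c + d - 1 ≠ 0 by omega),
    zero_pow (show c - d ≠ 0 by omega), zero_pow (show c - d - 1 ≠ 0 by omega), qPochR]

lemma Bfun_zero_succ (q t0 : ℝ) (m1 m2 : ℤ) {c d : ℕ} (hd : d ≠ 0) (hc : c = d + 1) :
    Bfun q t0 m1 m2 c d 0 = (qPochR q q m2.toNat)⁻¹ := by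
  subst hc
  simp [Bfun, zero_pow (show d + 1 + d ≠ 0 by omega),
    zero_pow (show d + 1 + d - 1 ≠ 0 by omega), zero_pow (show d + d ≠ 0 by omega),
    zero_pow (show d + 1 - d ≠ 0 by omega), show d + 1 - d - 1 = 0 by omega, qPochR]

lemma Bfun_zero_last (q t0 : ℝ) (m1 m2 : ℤ) :
    Bfun q t0 m1 m2 1 0 0 =
      (qPochR q (q * t0 ^ 2) m1.toNat)⁻¹ * (qPochR q q m2.toNat)⁻¹ := by
  simp [Bfun, qPochR]

lemma Dfun_contAt (q t0 : ℝ) (t : Fin 4 → ℝ) (M : ℤ) (e : ℕ)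
    (hden1 : (1 : ℝ) - ((0 : ℝ) ^ e * t0) ^ 2 ≠ 0)
    (hden2 : ∀ r, qPochR q (q * (t r)⁻¹ * ((0 : ℝ) ^ e * t0)) M.toNat ≠ 0) :
    ContinuousAt (Dfun q t0 t M e) 0 := by
  unfold Dfun
  apply ContinuousAt.mul
  · exact ContinuousAt.div (by fun_prop) (by fun_prop) hden1
  · have h : ∀ r : Fin 4, ContinuousAt (fun tt : ℝ =>
        qPochR q (t r * (tt ^ e * t0)) M.toNat /
          qPochR q (q * (t r)⁻¹ * (tt ^ e * t0)) M.toNat) 0 := by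
      intro r
      exact ContinuousAt.div (by fun_prop) (by fun_prop) (hden2 r)
    exact tendsto_finset_prod _ fun r _ => h r

lemma Bfun_contAt (q t0 : ℝ) (m1 m2 : ℤ) (c d : ℕ)
    (h1 : (1 : ℝ) - (0 : ℝ) ^ (c + d) * t0 ^ 2 ≠ 0)
    (h2 : qPochR q (q * ((0 : ℝ) ^ (c + d - 1) * t0 ^ 2)) m1.toNat ≠ 0)
    (h3 : (1 : ℝ) - (0 : ℝ) ^ (c - d) ≠ 0)
    (h4 : qPochR q (q * (0 : ℝ) ^ (c - d - 1)) m2.toNat ≠ 0) :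
    ContinuousAt (Bfun q t0 m1 m2 c d) 0 := by
  unfold Bfun
  apply ContinuousAt.mul
  apply ContinuousAt.mul
  apply ContinuousAt.mul
  · exact ContinuousAt.div (by fun_prop) (by fun_prop) h1
  · exact ContinuousAt.div (by fun_prop) (by fun_prop) h2
  · exact ContinuousAt.div (by fun_prop) (by fun_prop) h3
  · exact ContinuousAt.div (by fun_prop) (by fun_prop) h4

lemma getp_lt {n : ℕ} (lam : Fin n → ℤ) {k : ℕ} (h : k < n) : getp lam k = lam ⟨k, h⟩ :=
  dif_pos h

lemma getp_coe {n : ℕ} (lam : Fin n → ℤ) (j : Fin n) : getp lam (j : ℕ) = lam j := by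
  simp [getp]

/-- The `t → 0` degeneration of the Macdonald-Koornwinder norm
constants to the q-Whittaker norm constants. -/
theorem stmt14 {n : ℕ} (hn : 2 ≤ n) (q : ℝ) (hq : q ∈ Set.Ioo (0 : ℝ) 1)
    (th : Fin 4 → ℝ) (hth : ∀ r, th r ∈ Set.Ioo (-1 : ℝ) 1 ∧ th r ≠ 0)
    (hth0 : 0 < th 0) (hthprod : 0 < th 0 * th 1 * th 2 * th 3)
    (t0 : ℝ) (ht0 : t0 = Real.sqrt (q⁻¹ * (th 0 * th 1 * th 2 * th 3)))
    (t : Fin 4 → ℝ) (ht : t 0 = t0 ∧ ∀ r : Fin 4, r ≠ 0 → t r = th 0 * th r / t0)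
    (ht0ne : t0 ≠ 1)
    (lam : Fin n → ℤ) (hlam : IsPart lam) :
    Filter.Tendsto (fun tt : ℝ => Rnorm q t0 t tt lam) (nhdsWithin 0 (Set.Ioi 0))
      (nhds ((qPochR q (q * t0 ^ 2) ((getp lam (n - 2) + getp lam (n - 1)).toNat))⁻¹ *
        ((1 - t0 ^ 2 * q ^ (2 * getp lam (n - 1))) / (1 - t0 ^ 2)) *
        (∏ r, qPochR q (t0 * t r) ((getp lam (n - 1)).toNat) /
              qPochR q (q * t0 * (t r)⁻¹) ((getp lam (n - 1)).toNat)) *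
        ∏ j ∈ Finset.range (n - 1), (qPochR q q ((getp lam j - getp lam (j + 1)).toNat))⁻¹)) := by
  obtain ⟨hq0, hq1⟩ := hq
  have hprodpos : (0:ℝ) < th 0 * th 1 * th 2 * th 3 := hthprod
  have ht0pos : 0 < t0 := by
    rw [ht0]; exact Real.sqrt_pos.mpr (by positivity)
  have ht0z : t0 ≠ 0 := ne_of_gt ht0pos
  have ht0sq : t0 ^ 2 = q⁻¹ * (th 0 * th 1 * th 2 * th 3) := by
    rw [ht0, pow_two]
    exact Real.mul_self_sqrt (by positivity)
  have hqt0sq : q * t0 ^ 2 = th 0 * th 1 * th 2 * th 3 := by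
    rw [ht0sq]; field_simp
  have habs : ∀ r : Fin 4, |th r| < 1 := fun r => abs_lt.mpr ⟨(hth r).1.1, (hth r).1.2⟩
  have hthne : ∀ r : Fin 4, th r ≠ 0 := fun r => (hth r).2
  have keymul : ∀ a b : ℝ, |a| < 1 → |b| < 1 → |a * b| < 1 := by
    intro a b ha hb
    rw [abs_mul]
    nlinarith [abs_nonneg a, abs_nonneg b]
  have habsprod : |th 0 * th 1 * th 2 * th 3| < 1 :=
    keymul _ _ (keymul _ _ (keymul _ _ (habs 0) (habs 1)) (habs 2)) (habs 3)
  have hqt0lt : |q * t0 ^ 2| < 1 := by rw [hqt0sq]; exact habsprod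
  have h1sub : (1 : ℝ) - t0 ^ 2 ≠ 0 := by
    intro h
    apply ht0ne
    nlinarith
  have hdenR : ∀ r : Fin 4, |q * (t r)⁻¹ * t0| < 1 := by
    intro r
    fin_cases r
    · show |q * (t 0)⁻¹ * t0| < 1
      rw [ht.1, mul_assoc, inv_mul_cancel₀ ht0z, mul_one, abs_of_pos hq0]
      exact hq1
    · show |q * (t 1)⁻¹ * t0| < 1
      have e2 : q * (t 1)⁻¹ * t0 = th 2 * th 3 := by
        rw [ht.2 1 (by decide), inv_div]
        field_simp [hthne 0, hthne 1]
        linear_combination hqt0sq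
      rw [e2]; exact keymul _ _ (habs 2) (habs 3)
    · show |q * (t 2)⁻¹ * t0| < 1
      have e2 : q * (t 2)⁻¹ * t0 = th 1 * th 3 := by
        rw [ht.2 2 (by decide), inv_div]
        field_simp [hthne 0, hthne 2]
        linear_combination hqt0sq
      rw [e2]; exact keymul _ _ (habs 1) (habs 3)
    · show |q * (t 3)⁻¹ * t0| < 1
      have e2 : q * (t 3)⁻¹ * t0 = th 1 * th 2 := by
        rw [ht.2 3 (by decide), inv_div]
        field_simp [hthne 0, hthne 3]
        linear_combination hqt0sq
      rw [e2]; exact keymul _ _ (habs 1) (habs 2)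
  have hpochq : ∀ m : ℕ, qPochR q q m ≠ 0 :=
    fun m => (qPochR_pos' hq0.le hq1.le (by rw [abs_of_pos hq0]; exact hq1) m).ne'
  have hpochqt0 : ∀ m : ℕ, qPochR q (q * t0 ^ 2) m ≠ 0 :=
    fun m => (qPochR_pos' hq0.le hq1.le hqt0lt m).ne'
  have hpochR : ∀ (r : Fin 4) (m : ℕ), qPochR q (q * (t r)⁻¹ * t0) m ≠ 0 :=
    fun r m => (qPochR_pos' hq0.le hq1.le (hdenR r) m).ne'
  -- denominators for continuity
  have hDden1 : ∀ e : ℕ, (1:ℝ) - ((0:ℝ) ^ e * t0) ^ 2 ≠ 0 := by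
    intro e
    rcases eq_or_ne e 0 with he | he
    · subst he; simpa using h1sub
    · simp [zero_pow he]
  have hDden2 : ∀ (e : ℕ) (r : Fin 4) (m : ℕ),
      qPochR q (q * (t r)⁻¹ * ((0:ℝ) ^ e * t0)) m ≠ 0 := by
    intro e r m
    rcases eq_or_ne e 0 with he | he
    · subst he; simpa using hpochR r m
    · rw [zero_pow he, zero_mul, mul_zero, qPochR_zero']; exact one_ne_zero
  have hBden2 : ∀ (c : ℕ) (m : ℕ), qPochR q (q * ((0:ℝ) ^ c * t0 ^ 2)) m ≠ 0 := by
    intro c m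
    rcases eq_or_ne c 0 with he | he
    · subst he
      rw [pow_zero, one_mul]
      exact hpochqt0 m
    · rw [zero_pow he, zero_mul, mul_zero, qPochR_zero']; exact one_ne_zero
  have hBden4 : ∀ (c : ℕ) (m : ℕ), qPochR q (q * (0:ℝ) ^ c) m ≠ 0 := by
    intro c m
    rcases eq_or_ne c 0 with he | he
    · subst he; rw [pow_zero, mul_one]; exact hpochq m
    · rw [zero_pow he, mul_zero, qPochR_zero']; exact one_ne_zero
  -- the model function
  have hEq : (fun tt : ℝ => Rnorm q t0 t tt lam) =ᶠ[nhdsWithin 0 (Set.Ioi 0)]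
      (fun tt => (∏ j : Fin n, Dfun q t0 t (lam j) (n - 1 - (j:ℕ)) tt) *
        ∏ pr ∈ Finset.univ.filter (fun pr : Fin n × Fin n => pr.1 < pr.2),
          Bfun q t0 (lam pr.1 + lam pr.2) (lam pr.1 - lam pr.2)
            (n - 1 - (pr.1:ℕ)) (n - 1 - (pr.2:ℕ)) tt) := by
    filter_upwards [self_mem_nhdsWithin] with tt htt
    have htt' : tt ≠ 0 := ne_of_gt htt
    simp only [Rnorm, tauMK, Dfun]
    congr 1
    apply Finset.prod_congr rfl
    intro pr hpr
    have hlt : (pr.1 : ℕ) < (pr.2 : ℕ) := (Finset.mem_filter.mp hpr).2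
    have h2 := pr.2.isLt
    exact pair_eq q ht0z htt' (by omega) _ _
  have hlim : Filter.Tendsto
      (fun tt : ℝ => (∏ j : Fin n, Dfun q t0 t (lam j) (n - 1 - (j:ℕ)) tt) *
        ∏ pr ∈ Finset.univ.filter (fun pr : Fin n × Fin n => pr.1 < pr.2),
          Bfun q t0 (lam pr.1 + lam pr.2) (lam pr.1 - lam pr.2)
            (n - 1 - (pr.1:ℕ)) (n - 1 - (pr.2:ℕ)) tt)
      (nhdsWithin 0 (Set.Ioi 0))
      (nhds ((∏ j : Fin n, Dfun q t0 t (lam j) (n - 1 - (j:ℕ)) 0) *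
        ∏ pr ∈ Finset.univ.filter (fun pr : Fin n × Fin n => pr.1 < pr.2),
          Bfun q t0 (lam pr.1 + lam pr.2) (lam pr.1 - lam pr.2)
            (n - 1 - (pr.1:ℕ)) (n - 1 - (pr.2:ℕ)) 0)) := by
    apply Filter.Tendsto.mul
    · exact tendsto_finset_prod _ fun j _ =>
        ((Dfun_contAt q t0 t (lam j) _ (hDden1 _) (fun r => hDden2 _ r _)).continuousWithinAt)
    · refine tendsto_finset_prod _ fun pr hpr => ?_
      have hlt : (pr.1 : ℕ) < (pr.2 : ℕ) := (Finset.mem_filter.mp hpr).2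
      have h2 := pr.2.isLt
      refine (Bfun_contAt q t0 _ _ _ _ ?_ (hBden2 _ _) ?_ (hBden4 _ _)).continuousWithinAt
      · rw [zero_pow (show n - 1 - (pr.1:ℕ) + (n - 1 - (pr.2:ℕ)) ≠ 0 by omega)]
        norm_num
      · rw [zero_pow (show n - 1 - (pr.1:ℕ) - (n - 1 - (pr.2:ℕ)) ≠ 0 by omega)]
        norm_num
  -- evaluate the limit
  have hnlt : n - 1 < n := by omega
  have hdiag : (∏ j : Fin n, Dfun q t0 t (lam j) (n - 1 - (j:ℕ)) 0)
      = Dfun q t0 t (lam ⟨n - 1, hnlt⟩) 0 0 := by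
    rw [Finset.prod_eq_single (⟨n - 1, hnlt⟩ : Fin n)]
    · norm_num
    · intro j _ hj
      apply Dfun_zero_pos
      have hj' : (j : ℕ) ≠ n - 1 := by
        intro h
        exact hj (Fin.ext h)
      have := j.isLt
      omega
    · intro h; exact absurd (Finset.mem_univ _) h
  have hsub : (∏ pr ∈ Finset.univ.filter (fun pr : Fin n × Fin n => pr.1 < pr.2),
        Bfun q t0 (lam pr.1 + lam pr.2) (lam pr.1 - lam pr.2)
          (n - 1 - (pr.1:ℕ)) (n - 1 - (pr.2:ℕ)) 0)
      = ∏ pr ∈ (Finset.univ.filter (fun pr : Fin n × Fin n => pr.1 < pr.2)).filter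
            (fun pr => (pr.2:ℕ) = (pr.1:ℕ) + 1),
          Bfun q t0 (lam pr.1 + lam pr.2) (lam pr.1 - lam pr.2)
            (n - 1 - (pr.1:ℕ)) (n - 1 - (pr.2:ℕ)) 0 := by
    refine (Finset.prod_subset (Finset.filter_subset _ _) ?_).symm
    intro pr hpr hnpr
    have hlt : (pr.1 : ℕ) < (pr.2 : ℕ) := (Finset.mem_filter.mp hpr).2
    have hne : (pr.2:ℕ) ≠ (pr.1:ℕ) + 1 := by
      intro h; exact hnpr (Finset.mem_filter.mpr ⟨hpr, h⟩)
    have h2 := pr.2.isLt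
    exact Bfun_zero_far q t0 _ _ (by omega)
  have hbij : (∏ pr ∈ (Finset.univ.filter (fun pr : Fin n × Fin n => pr.1 < pr.2)).filter
            (fun pr => (pr.2:ℕ) = (pr.1:ℕ) + 1),
          Bfun q t0 (lam pr.1 + lam pr.2) (lam pr.1 - lam pr.2)
            (n - 1 - (pr.1:ℕ)) (n - 1 - (pr.2:ℕ)) 0)
      = ∏ i ∈ Finset.range (n - 1),
          Bfun q t0 (getp lam i + getp lam (i + 1)) (getp lam i - getp lam (i + 1))
            (n - 1 - i) (n - 1 - (i + 1)) 0 := by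
    refine Finset.prod_bij' (fun pr _ => (pr.1 : ℕ))
      (fun i hi => (⟨i, by have := Finset.mem_range.mp hi; omega⟩,
        ⟨i + 1, by have := Finset.mem_range.mp hi; omega⟩)) ?_ ?_ ?_ ?_ ?_
    · intro pr hpr
      simp only [Finset.mem_filter] at hpr
      have hlt : (pr.1 : ℕ) < (pr.2 : ℕ) := hpr.1.2
      have h2 := pr.2.isLt
      show (pr.1 : ℕ) ∈ Finset.range (n - 1)
      exact Finset.mem_range.mpr (by omega)
    · intro i hi
      have hi' := Finset.mem_range.mp hi
      simp only [Finset.mem_filter, Finset.mem_univ, true_and]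
      constructor
      · exact Fin.mk_lt_mk.mpr (by omega)
      · trivial
    · intro pr hpr
      simp only [Finset.mem_filter] at hpr
      have hk : (pr.2:ℕ) = (pr.1:ℕ) + 1 := hpr.2
      exact Prod.ext (Fin.ext rfl) (Fin.ext hk.symm)
    · intro i hi
      rfl
    · intro pr hpr
      simp only [Finset.mem_filter] at hpr
      have hk : (pr.2:ℕ) = (pr.1:ℕ) + 1 := hpr.2
      have h2 := pr.2.isLt
      have hlt1 : ((pr.1:ℕ) + 1) < n := by omega
      have hpr2 : pr.2 = ⟨(pr.1:ℕ) + 1, hlt1⟩ := Fin.ext hk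
      rw [getp_coe, getp_lt lam hlt1, hpr2]
  have hrange : (∏ i ∈ Finset.range (n - 1),
        Bfun q t0 (getp lam i + getp lam (i + 1)) (getp lam i - getp lam (i + 1))
          (n - 1 - i) (n - 1 - (i + 1)) 0)
      = ∏ i ∈ Finset.range (n - 1),
          ((if i = n - 2 then
              (qPochR q (q * t0 ^ 2) ((getp lam (n - 2) + getp lam (n - 1)).toNat))⁻¹ else 1) *
            (qPochR q q ((getp lam i - getp lam (i + 1)).toNat))⁻¹) := by
    refine Finset.prod_congr rfl fun i hi => ?_
    have hi' : i < n - 1 := Finset.mem_range.mp hi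
    rcases eq_or_ne i (n - 2) with he | he
    · subst he
      rw [if_pos rfl, show n - 1 - (n - 2) = 1 by omega, show n - 1 - (n - 2 + 1) = 0 by omega,
        show n - 2 + 1 = n - 1 by omega]
      exact Bfun_zero_last q t0 _ _
    · rw [if_neg he, one_mul]
      exact Bfun_zero_succ q t0 _ _ (by omega) (by omega)
  have hifprod : (∏ i ∈ Finset.range (n - 1),
        (if i = n - 2 then
          (qPochR q (q * t0 ^ 2) ((getp lam (n - 2) + getp lam (n - 1)).toNat))⁻¹ else 1))
      = (qPochR q (q * t0 ^ 2) ((getp lam (n - 2) + getp lam (n - 1)).toNat))⁻¹ := by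
    rw [Finset.prod_ite_eq' (Finset.range (n - 1)) (n - 2)
      (fun _ => (qPochR q (q * t0 ^ 2) ((getp lam (n - 2) + getp lam (n - 1)).toNat))⁻¹)]
    rw [if_pos (Finset.mem_range.mpr (by omega))]
  have hfinal := Filter.Tendsto.congr' hEq.symm hlim
  rw [hdiag, hsub, hbij, hrange, Finset.prod_mul_distrib, hifprod] at hfinal
  convert hfinal using 2
  rw [getp_lt lam hnlt, Dfun_zero_top]
  have hcomm : (∏ r, qPochR q (t0 * t r) ((lam ⟨n - 1, hnlt⟩).toNat) /
      qPochR q (q * t0 * (t r)⁻¹) ((lam ⟨n - 1, hnlt⟩).toNat))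
      = ∏ r, qPochR q (t r * t0) ((lam ⟨n - 1, hnlt⟩).toNat) /
          qPochR q (q * (t r)⁻¹ * t0) ((lam ⟨n - 1, hnlt⟩).toNat) := by
    refine Finset.prod_congr rfl fun r _ => ?_
    rw [mul_comm t0 (t r), show q * t0 * (t r)⁻¹ = q * (t r)⁻¹ * t0 by ring]
  rw [hcomm]
  ring

end
end

section
/- For λ ∈ ℤ^n and ξ ∈ ℝ^n let χ_ξ(λ) = (2π)^{−n/2} i^{−n²} Σ_{w∈W} sign(w) e^{i⟨w(ρ+λ),ξ⟩}, with ρ = (n, n−1, …, 1) and sign(w) = ε_1⋯ε_n · sign(σ) for w = (σ,ε) ∈ W. Then: (i) if λ ∈ Λ and j ∈ {1,…,n} are such that λ + e_j ∉ Λ or λ − e_j ∉ Λ, then χ_ξ(λ + e_j) = 0, respectively χ_ξ(λ − e_j) = 0, for all ξ ∈ ℝ^n; and (ii) for every λ ∈ Λ and ξ ∈ ℝ^n, Σ_{1≤j≤n, λ+e_j∈Λ} χ_ξ(λ + e_j) + Σ_{1≤j≤n, λ−e_j∈Λ} χ_ξ(λ − e_j) = 2(cos ξ_1 + ⋯ +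 cos ξ_n) χ_ξ(λ). (The anti-invariant Fourier kernel diagonalizes the discrete Laplacian on the cone of partitions.) -/
open scoped BigOperators
open MeasureTheory Filter

noncomputable section

attribute [local instance] Classical.propDecidable

/-- sign character of the hyperoctahedral group. -/
def signW {n : ℕ} (w : Equiv.Perm (Fin n) × (Fin n → Bool)) : ℤ :=
  (Equiv.Perm.sign w.1 : ℤ) * ∏ j, (if w.2 j then 1 else -1)

/-- the staircase vector `ρ = (n, n-1, …, 1)`. -/
def rhoV (n : ℕ) : Fin n → ℤ := fun j => (n : ℤ) - (j : ℕ)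

/-- the anti-invariant Fourier kernel `χ_ξ(λ)`. -/
def chiKer {n : ℕ} (ξ : Fin n → ℝ) (lam : Fin n → ℤ) : ℂ :=
  (((2 * Real.pi) ^ (-(n : ℝ) / 2) : ℝ) : ℂ) * Complex.I ^ (-(n ^ 2 : ℤ)) *
    ∑ w : Equiv.Perm (Fin n) × (Fin n → Bool),
      (signW w : ℂ) *
        Complex.exp (Complex.I *
          ∑ j, ((signAct w.1 w.2 (rhoV n + lam) j : ℂ) * (ξ j : ℂ)))


namespace Stmt17Aux

variable {n : ℕ}

/-- the inner sum appearing in `chiKer`. -/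
noncomputable def inS (ξ : Fin n → ℝ) (σ : Equiv.Perm (Fin n)) (ε : Fin n → Bool)
    (v : Fin n → ℤ) : ℂ :=
  ∑ j, (signAct σ ε v j : ℂ) * (ξ j : ℂ)

/-- the antisymmetrized exponential sum. -/
noncomputable def Ssum (ξ : Fin n → ℝ) (v : Fin n → ℤ) : ℂ :=
  ∑ w : Equiv.Perm (Fin n) × (Fin n → Bool),
    (signW w : ℂ) * Complex.exp (Complex.I * inS ξ w.1 w.2 v)

lemma chiKer_eq (ξ : Fin n → ℝ) (lam : Fin n → ℤ) :
    chiKer ξ lam =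
      (((2 * Real.pi) ^ (-(n : ℝ) / 2) : ℝ) : ℂ) * Complex.I ^ (-(n ^ 2 : ℤ)) *
        Ssum ξ (rhoV n + lam) := rfl

lemma Ssum_eq_zero_of_eq (ξ : Fin n → ℝ) {v : Fin n → ℤ} {a b : Fin n}
    (hab : a ≠ b) (hv : v a = v b) : Ssum ξ v = 0 := by
  have hswap : ∀ x, v (Equiv.swap a b x) = v x := by
    intro x
    rcases eq_or_ne x a with rfl | hxa
    · rw [Equiv.swap_apply_left]; exact hv.symm
    rcases eq_or_ne x b with rfl | hxb
    · rw [Equiv.swap_apply_right]; exact hv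
    · rw [Equiv.swap_apply_of_ne_of_ne hxa hxb]
  set g : Equiv.Perm (Fin n) × (Fin n → Bool) → ℂ :=
    fun w => (signW w : ℂ) * Complex.exp (Complex.I * inS ξ w.1 w.2 v) with hg
  have hge : ∀ w : Equiv.Perm (Fin n) × (Fin n → Bool),
      g (Equiv.swap a b * w.1, w.2) = - g w := by
    intro ⟨σ, ε⟩
    have hsign : signW (Equiv.swap a b * σ, ε) = - signW (σ, ε) := by
      simp only [signW, map_mul, Equiv.Perm.sign_swap hab, Units.val_mul, Units.val_neg,
        Units.val_one]
      ring
    have hin : inS ξ (Equiv.swap a b * σ) ε v = inS ξ σ ε v := by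
      unfold inS signAct
      refine Finset.sum_congr rfl fun j _ => ?_
      rw [Equiv.Perm.mul_apply, hswap]
    rw [hg]
    simp only [hsign, hin]
    push_cast
    ring
  have h2 : Ssum ξ v = - Ssum ξ v := by
    calc Ssum ξ v
        = ∑ w : Equiv.Perm (Fin n) × (Fin n → Bool),
            g ((Equiv.mulLeft (Equiv.swap a b)).prodCongr (Equiv.refl _) w) :=
          (Fintype.sum_equiv _ _ _ fun _ => rfl).symm
      _ = ∑ w : Equiv.Perm (Fin n) × (Fin n → Bool), - g w := by
          refine Finset.sum_congr rfl fun w _ => ?_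
          exact hge w
      _ = - Ssum ξ v := by rw [Finset.sum_neg_distrib]; rfl
  exact add_self_eq_zero.mp (eq_neg_iff_add_eq_zero.mp h2)

/-- flipping one sign negates the product of signs. -/
lemma prod_update_neg (ε : Fin n → Bool) (i : Fin n) :
    (∏ j, (if (Function.update ε i (! ε i)) j then (1:ℤ) else -1)) =
      - ∏ j, (if ε j then (1:ℤ) else -1) := by
  rw [← Finset.mul_prod_erase Finset.univ
      (fun j => if (Function.update ε i (! ε i)) j then (1:ℤ) else -1) (Finset.mem_univ i),
    ← Finset.mul_prod_erase Finset.univ (fun j => if ε j then (1:ℤ) else -1) (Finset.mem_univ i)]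
  have h1 : (∏ j ∈ Finset.univ.erase i, (if (Function.update ε i (! ε i)) j then (1:ℤ) else -1))
      = ∏ j ∈ Finset.univ.erase i, (if ε j then (1:ℤ) else -1) := by
    refine Finset.prod_congr rfl fun j hj => ?_
    rw [Function.update_of_ne (Finset.ne_of_mem_erase hj)]
  rw [h1, Function.update_self]
  cases h : ε i <;> simp

def flipEquiv (k : Fin n) :
    (Equiv.Perm (Fin n) × (Fin n → Bool)) ≃ (Equiv.Perm (Fin n) × (Fin n → Bool)) where
  toFun w := (w.1, Function.update w.2 (w.1⁻¹ k) (! w.2 (w.1⁻¹ k)))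
  invFun w := (w.1, Function.update w.2 (w.1⁻¹ k) (! w.2 (w.1⁻¹ k)))
  left_inv w := by
    obtain ⟨σ, ε⟩ := w
    simp [Function.update_idem, Function.update_self, Function.update_eq_self]
  right_inv w := by
    obtain ⟨σ, ε⟩ := w
    simp [Function.update_idem, Function.update_self, Function.update_eq_self]

lemma Ssum_eq_zero_of_zero (ξ : Fin n → ℝ) {v : Fin n → ℤ} {k : Fin n}
    (hv : v k = 0) : Ssum ξ v = 0 := by
  set g : Equiv.Perm (Fin n) × (Fin n → Bool) → ℂ :=
    fun w => (signW w : ℂ) * Complex.exp (Complex.I * inS ξ w.1 w.2 v) with hg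
  have hge : ∀ w : Equiv.Perm (Fin n) × (Fin n → Bool),
      g (flipEquiv k w) = - g w := by
    intro ⟨σ, ε⟩
    have hsign : signW (σ, Function.update ε (σ⁻¹ k) (! ε (σ⁻¹ k))) = - signW (σ, ε) := by
      simp only [signW]
      rw [prod_update_neg]
      ring
    have hact : signAct σ (Function.update ε (σ⁻¹ k) (! ε (σ⁻¹ k))) v = signAct σ ε v := by
      funext j
      rcases eq_or_ne j (σ⁻¹ k) with rfl | hj
      · have : v (σ (σ⁻¹ k)) = 0 := by rw [show σ (σ⁻¹ k) = k from σ.apply_symm_apply k]; exact hv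
        simp [signAct, this, hv]
      · simp [signAct, Function.update_of_ne (show j ≠ σ.symm k from hj)]
    have hin : inS ξ σ (Function.update ε (σ⁻¹ k) (! ε (σ⁻¹ k))) v = inS ξ σ ε v := by
      unfold inS; rw [hact]
    rw [hg]
    show (signW (σ, Function.update ε (σ⁻¹ k) (! ε (σ⁻¹ k))) : ℂ) *
        Complex.exp (Complex.I * inS ξ σ (Function.update ε (σ⁻¹ k) (! ε (σ⁻¹ k))) v) = _
    rw [hsign, hin]
    push_cast
    ring
  have h2 : Ssum ξ v = - Ssum ξ v := by
    calc Ssum ξ v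
        = ∑ w : Equiv.Perm (Fin n) × (Fin n → Bool), g (flipEquiv k w) :=
          (Fintype.sum_equiv _ _ _ fun _ => rfl).symm
      _ = ∑ w : Equiv.Perm (Fin n) × (Fin n → Bool), - g w :=
          Finset.sum_congr rfl fun w _ => hge w
      _ = - Ssum ξ v := by rw [Finset.sum_neg_distrib]; rfl
  exact add_self_eq_zero.mp (eq_neg_iff_add_eq_zero.mp h2)

lemma inS_add (ξ : Fin n → ℝ) (σ : Equiv.Perm (Fin n)) (ε : Fin n → Bool) (v : Fin n → ℤ)
    (k : Fin n) :
    inS ξ σ ε (v + eVec k) =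
      inS ξ σ ε v + (if ε (σ⁻¹ k) then 1 else -1) * (ξ (σ⁻¹ k) : ℂ) := by
  have hact : ∀ j, signAct σ ε (v + eVec k) j =
      signAct σ ε v j + (if j = σ⁻¹ k then (if ε (σ⁻¹ k) then 1 else -1) else 0) := by
    intro j
    rcases eq_or_ne j (σ⁻¹ k) with rfl | hj
    · have h : σ (σ⁻¹ k) = k := σ.apply_symm_apply k
      simp [signAct, eVec, h, mul_add]
    · have h : σ j ≠ k := fun h => hj (by rw [← h]; exact (σ.symm_apply_apply j).symm)
      simp [signAct, eVec, h, (show j ≠ σ.symm k from hj)]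
  unfold inS
  simp only [hact]
  push_cast
  simp only [add_mul]
  rw [Finset.sum_add_distrib]
  congr 1
  have hsplit : ∀ x : Fin n,
      (if x = σ⁻¹ k then (if ε (σ⁻¹ k) then (1:ℂ) else -1) else 0) * (ξ x : ℂ)
        = if x = σ⁻¹ k then (if ε (σ⁻¹ k) then (1:ℂ) else -1) * (ξ x : ℂ) else 0 := by
    intro x; split <;> simp
  simp only [hsplit]
  rw [Finset.sum_ite_eq' Finset.univ (σ⁻¹ k)
    (fun x => (if ε (σ⁻¹ k) then (1:ℂ) else -1) * (ξ x : ℂ))]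
  simp

lemma inS_sub (ξ : Fin n → ℝ) (σ : Equiv.Perm (Fin n)) (ε : Fin n → Bool) (v : Fin n → ℤ)
    (k : Fin n) :
    inS ξ σ ε (v - eVec k) =
      inS ξ σ ε v - (if ε (σ⁻¹ k) then 1 else -1) * (ξ (σ⁻¹ k) : ℂ) := by
  have h := inS_add ξ σ ε (v - eVec k) k
  rw [sub_add_cancel] at h
  rw [h]; ring

lemma sum_exp (ξ : Fin n → ℝ) (v : Fin n → ℤ) (σ : Equiv.Perm (Fin n)) (ε : Fin n → Bool) :
    (∑ k, Complex.exp (Complex.I * inS ξ σ ε (v + eVec k))) +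
      ∑ k, Complex.exp (Complex.I * inS ξ σ ε (v - eVec k)) =
      (2 * ∑ j, (Real.cos (ξ j) : ℂ)) * Complex.exp (Complex.I * inS ξ σ ε v) := by
  have hpair : ∀ k : Fin n,
      Complex.exp (Complex.I * inS ξ σ ε (v + eVec k)) +
        Complex.exp (Complex.I * inS ξ σ ε (v - eVec k)) =
      2 * (Real.cos (ξ (σ⁻¹ k)) : ℂ) * Complex.exp (Complex.I * inS ξ σ ε v) := by
    intro k
    rw [inS_add, inS_sub]
    set A := inS ξ σ ε v with hA
    have key : ∀ c : ℂ, Complex.exp (Complex.I * (A + c)) +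
        Complex.exp (Complex.I * (A - c)) =
        2 * Complex.cos c * Complex.exp (Complex.I * A) := by
      intro c
      have h1 : Complex.I * (A + c) = Complex.I * A + c * Complex.I := by ring
      have h2 : Complex.I * (A - c) = Complex.I * A + -c * Complex.I := by ring
      rw [h1, h2, Complex.exp_add, Complex.exp_add, ← mul_add, ← Complex.two_cos]
      ring
    by_cases hε : ε (σ⁻¹ k) = true
    · rw [if_pos hε, one_mul, key, Complex.ofReal_cos]
    · rw [if_neg hε, show (-1 : ℂ) * (ξ (σ⁻¹ k) : ℂ) = -(ξ (σ⁻¹ k) : ℂ) from by ring,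
        key, Complex.cos_neg, Complex.ofReal_cos]
  rw [← Finset.sum_add_distrib]
  simp only [hpair]
  rw [← Finset.sum_mul, ← Finset.mul_sum]
  congr 2
  exact Equiv.sum_comp σ⁻¹ (fun j => (Real.cos (ξ j) : ℂ))

lemma Ssum_key (ξ : Fin n → ℝ) (v : Fin n → ℤ) :
    (∑ k, Ssum ξ (v + eVec k)) + (∑ k, Ssum ξ (v - eVec k)) =
      2 * (∑ j, (Real.cos (ξ j) : ℂ)) * Ssum ξ v := by
  unfold Ssum
  rw [Finset.sum_comm, Finset.sum_comm (γ := Fin n), ← Finset.sum_add_distrib,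
    Finset.mul_sum]
  refine Finset.sum_congr rfl fun w _ => ?_
  rw [← Finset.mul_sum, ← Finset.mul_sum, ← mul_add, sum_exp]
  ring

lemma part_plus {lam : Fin n → ℤ} (hlam : IsPart lam) (j : Fin n)
    (hnot : ¬ IsPart (lam + eVec j)) :
    ∃ a : Fin n, a ≠ j ∧ (rhoV n + (lam + eVec j)) a = (rhoV n + (lam + eVec j)) j := by
  have hnn : ∀ k, 0 ≤ (lam + eVec j) k := by
    intro k
    have := hlam.2 k
    simp only [Pi.add_apply, eVec]
    split <;> omega
  have hdec : ¬ ∀ a b : Fin n, a ≤ b → (lam + eVec j) b ≤ (lam + eVec j) a :=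
    fun h => hnot ⟨h, hnn⟩
  push_neg at hdec
  obtain ⟨a, b, hab, hlt⟩ := hdec
  simp only [Pi.add_apply, eVec] at hlt
  have hba : lam b ≤ lam a := hlam.1 a b hab
  have hbj : b = j := by
    by_contra hbj
    rw [if_neg hbj] at hlt
    split at hlt <;> omega
  subst hbj
  rw [if_pos rfl] at hlt
  have haj : a ≠ b := by
    intro h; rw [if_pos h] at hlt; omega
  rw [if_neg haj] at hlt
  have halam : lam a = lam b := by omega
  have haltb : (a : ℕ) < (b : ℕ) := Fin.lt_def.mp (lt_of_le_of_ne hab haj)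
  have hb1n : (b : ℕ) - 1 < n := by have := b.isLt; omega
  set a' : Fin n := ⟨(b : ℕ) - 1, hb1n⟩ with ha'
  have ha'v : (a' : ℕ) = (b : ℕ) - 1 := rfl
  have haa' : a ≤ a' := by rw [Fin.le_def, ha'v]; omega
  have ha'b : a' ≤ b := by rw [Fin.le_def, ha'v]; omega
  have h1 : lam a' ≤ lam a := hlam.1 a a' haa'
  have h2 : lam b ≤ lam a' := hlam.1 a' b ha'b
  have ha'lam : lam a' = lam b := by omega
  have ha'j : a' ≠ b := by
    intro h
    rw [Fin.ext_iff, ha'v] at h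
    omega
  refine ⟨a', ha'j, ?_⟩
  simp only [Pi.add_apply, eVec, rhoV, if_neg ha'j, if_pos rfl, ha'lam]
  have hc : ((a' : ℕ) : ℤ) = ((b : ℕ) : ℤ) - 1 := by
    rw [ha'v]; push_cast [Nat.cast_sub (by omega : 1 ≤ (b : ℕ))]; ring
  rw [hc, if_pos trivial]
  ring

lemma part_minus {lam : Fin n → ℤ} (hlam : IsPart lam) (j : Fin n)
    (hnot : ¬ IsPart (lam - eVec j)) :
    (∃ a : Fin n, a ≠ j ∧ (rhoV n + (lam - eVec j)) a = (rhoV n + (lam - eVec j)) j) ∨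
      (rhoV n + (lam - eVec j)) j = 0 := by
  by_cases hz : lam j = 0
  · by_cases hjn : (j : ℕ) + 1 < n
    · left
      set a : Fin n := ⟨(j : ℕ) + 1, hjn⟩ with ha
      have hav : (a : ℕ) = (j : ℕ) + 1 := rfl
      have hja : j ≤ a := by rw [Fin.le_def, hav]; omega
      have h1 : lam a ≤ lam j := hlam.1 j a hja
      have h2 : 0 ≤ lam a := hlam.2 a
      have haz : lam a = 0 := by omega
      have haj : a ≠ j := by
        intro h; rw [Fin.ext_iff, hav] at h; omega
      refine ⟨a, haj, ?_⟩
      simp only [Pi.add_apply, Pi.sub_apply, eVec, rhoV, if_neg haj, if_pos rfl, haz, hz]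
      have hc : ((a : ℕ) : ℤ) = ((j : ℕ) : ℤ) + 1 := by rw [hav]; push_cast; ring
      rw [hc, if_pos trivial]
      ring
    · right
      have hj : (j : ℕ) = n - 1 := by have := j.isLt; omega
      simp only [Pi.add_apply, Pi.sub_apply, eVec, rhoV, if_pos rfl, hz]
      have h1n : 1 ≤ n := by have := j.isLt; omega
      have hc : ((j : ℕ) : ℤ) = (n : ℤ) - 1 := by
        rw [hj]; push_cast [Nat.cast_sub h1n]; ring
      rw [hc, if_pos trivial]
      norm_num
  · left
    have hz1 : 1 ≤ lam j := by have := hlam.2 j; omega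
    have hnn : ∀ k, 0 ≤ (lam - eVec j) k := by
      intro k
      have := hlam.2 k
      simp only [Pi.sub_apply, eVec]
      split
      · next h => subst h; omega
      · omega
    have hdec : ¬ ∀ a b : Fin n, a ≤ b → (lam - eVec j) b ≤ (lam - eVec j) a :=
      fun h => hnot ⟨h, hnn⟩
    push_neg at hdec
    obtain ⟨a, b, hab, hlt⟩ := hdec
    simp only [Pi.sub_apply, eVec] at hlt
    have hba : lam b ≤ lam a := hlam.1 a b hab
    have haj : a = j := by
      by_contra haj
      rw [if_neg haj] at hlt
      split at hlt <;> omega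
    subst haj
    rw [if_pos rfl] at hlt
    have hbj : b ≠ a := by
      intro h; rw [if_pos h] at hlt; omega
    rw [if_neg hbj] at hlt
    have hblam : lam b = lam a := by omega
    have haltb : (a : ℕ) < (b : ℕ) :=
      Fin.lt_def.mp (lt_of_le_of_ne hab (fun h => hbj h.symm))
    have hjn : (a : ℕ) + 1 < n := by have := b.isLt; omega
    set a' : Fin n := ⟨(a : ℕ) + 1, hjn⟩ with ha'
    have ha'v : (a' : ℕ) = (a : ℕ) + 1 := rfl
    have h1 : lam a' ≤ lam a := hlam.1 a a' (by rw [Fin.le_def, ha'v]; omega)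
    have h2 : lam b ≤ lam a' := hlam.1 a' b (by rw [Fin.le_def, ha'v]; omega)
    have ha'lam : lam a' = lam a := by omega
    have ha'j : a' ≠ a := by
      intro h; rw [Fin.ext_iff, ha'v] at h; omega
    refine ⟨a', ha'j, ?_⟩
    simp only [Pi.add_apply, Pi.sub_apply, eVec, rhoV, if_neg ha'j, if_pos rfl, ha'lam]
    have hc : ((a' : ℕ) : ℤ) = ((a : ℕ) : ℤ) + 1 := by rw [ha'v]; push_cast; ring
    rw [hc, if_pos trivial]
    ring

lemma chiKer_plus_zero {lam : Fin n → ℤ} (hlam : IsPart lam) (j : Fin n)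
    (hnot : ¬ IsPart (lam + eVec j)) (ξ : Fin n → ℝ) : chiKer ξ (lam + eVec j) = 0 := by
  obtain ⟨a, ha, hva⟩ := part_plus hlam j hnot
  rw [chiKer_eq, Ssum_eq_zero_of_eq ξ ha hva, mul_zero]

lemma chiKer_minus_zero {lam : Fin n → ℤ} (hlam : IsPart lam) (j : Fin n)
    (hnot : ¬ IsPart (lam - eVec j)) (ξ : Fin n → ℝ) : chiKer ξ (lam - eVec j) = 0 := by
  rcases part_minus hlam j hnot with ⟨a, ha, hva⟩ | hz
  · rw [chiKer_eq, Ssum_eq_zero_of_eq ξ ha hva, mul_zero]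
  · rw [chiKer_eq, Ssum_eq_zero_of_zero ξ hz, mul_zero]

end Stmt17Aux

/-- The anti-invariant Fourier kernel diagonalizes the discrete
Laplacian on the cone of partitions: (i) `χ_ξ` vanishes at points leaving the cone,
and (ii) the eigenvalue equation with eigenvalue `2(cos ξ_1 + ⋯ + cos ξ_n)`. -/
theorem stmt17 {n : ℕ} (hn : 1 ≤ n) (lam : Fin n → ℤ) (hlam : IsPart lam) :
    (∀ j : Fin n, ¬ IsPart (lam + eVec j) → ∀ ξ : Fin n → ℝ, chiKer ξ (lam + eVec j) = 0) ∧
    (∀ j : Fin n, ¬ IsPart (lam - eVec j) → ∀ ξ : Fin n → ℝ, chiKer ξ (lam - eVec j) = 0) ∧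
    (∀ ξ : Fin n → ℝ,
      (∑ j ∈ Finset.univ.filter (fun j : Fin n => IsPart (lam + eVec j)),
          chiKer ξ (lam + eVec j)) +
      (∑ j ∈ Finset.univ.filter (fun j : Fin n => IsPart (lam - eVec j)),
          chiKer ξ (lam - eVec j)) =
        2 * (∑ j, (Real.cos (ξ j) : ℂ)) * chiKer ξ lam) := by
  open Stmt17Aux in
  refine ⟨fun j hj ξ => chiKer_plus_zero hlam j hj ξ,
          fun j hj ξ => chiKer_minus_zero hlam j hj ξ, fun ξ => ?_⟩
  have h1 : (∑ j ∈ Finset.univ.filter (fun j : Fin n => IsPart (lam + eVec j)),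
      chiKer ξ (lam + eVec j)) = ∑ j, chiKer ξ (lam + eVec j) := by
    refine Finset.sum_subset (Finset.filter_subset _ _) fun j _ hj => ?_
    simp only [Finset.mem_filter, Finset.mem_univ, true_and] at hj
    exact chiKer_plus_zero hlam j hj ξ
  have h2 : (∑ j ∈ Finset.univ.filter (fun j : Fin n => IsPart (lam - eVec j)),
      chiKer ξ (lam - eVec j)) = ∑ j, chiKer ξ (lam - eVec j) := by
    refine Finset.sum_subset (Finset.filter_subset _ _) fun j _ hj => ?_
    simp only [Finset.mem_filter, Finset.mem_univ, true_and] at hj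
    exact chiKer_minus_zero hlam j hj ξ
  rw [h1, h2]
  have hplus : ∀ j : Fin n, rhoV n + (lam + eVec j) = (rhoV n + lam) + eVec j := by
    intro j; ring
  have hminus : ∀ j : Fin n, rhoV n + (lam - eVec j) = (rhoV n + lam) - eVec j := by
    intro j; ring
  simp only [chiKer_eq, hplus, hminus]
  rw [← Finset.mul_sum, ← Finset.mul_sum, ← mul_add, Ssum_key]
  ring


end
end
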